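/- Let S ∈ ℝ^{r×n} be a matrix with all entries in {0,1} such that every column of S has at most h nonzero entries. Let A, A' ∈ ℝ^{n×m} agree in every row except possibly row k, and suppose every row of A and of A' has ℓ₂ norm at most B. Then ‖SA − SA'‖_F ≤ 2B·√h; i.e., the ℓ₂ sensitivity of the map A ↦ SA with respect to changing one row is at most 2B√h. -/

import Mathlib

open Matrix BigOperators

/-- Euclidean norm of a vector. -/
noncomputable def euclNorm {ι : Type*} [Fintype ι] (v : ι → ℝ) : ℝ :=
  Real.sqrt (∑ i, (v i) ^ 2)

/-- Frobenius norm of a matrix. -/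
noncomputable def frobNorm {ι κ : Type*} [Fintype ι] [Fintype κ] (M : Matrix ι κ ℝ) : ℝ :=
  Real.sqrt (∑ i, ∑ j, (M i j) ^ 2)

lemma eucl_triangle {ι : Type*} [Fintype ι] (a b : ι → ℝ) :
    euclNorm (a - b) ≤ euclNorm a + euclNorm b := by
  unfold euclNorm
  have hcs : (∑ i, a i * b i) ^ 2 ≤ (∑ i, (a i) ^ 2) * ∑ i, (b i) ^ 2 :=
    Finset.sum_mul_sq_le_sq_mul_sq Finset.univ a b
  set sa := Real.sqrt (∑ i, (a i) ^ 2) with hsa'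
  set sb := Real.sqrt (∑ i, (b i) ^ 2) with hsb'
  have hsa : sa ^ 2 = ∑ i, (a i) ^ 2 :=
    Real.sq_sqrt (Finset.sum_nonneg fun i _ => sq_nonneg _)
  have hsb : sb ^ 2 = ∑ i, (b i) ^ 2 :=
    Real.sq_sqrt (Finset.sum_nonneg fun i _ => sq_nonneg _)
  have h1 : ∑ i, ((a - b) i) ^ 2 ≤ (sa + sb) ^ 2 := by
    have hexp : ∑ i, ((a - b) i) ^ 2
        = ∑ i, (a i)^2 - 2 * ∑ i, a i * b i + ∑ i, (b i)^2 := by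
      simp only [Pi.sub_apply, sub_sq, Finset.sum_add_distrib, Finset.sum_sub_distrib,
        Finset.mul_sum, mul_assoc]
    have hprod : sa ^ 2 * sb ^ 2 = (∑ i, (a i) ^ 2) * ∑ i, (b i) ^ 2 := by
      rw [hsa, hsb]
    have hpnn : 0 ≤ sa * sb :=
      mul_nonneg (Real.sqrt_nonneg _) (Real.sqrt_nonneg _)
    rw [hexp]
    nlinarith [sq_nonneg (sa * sb + ∑ i, a i * b i), hprod, hcs, hpnn, hsa, hsb]
  calc Real.sqrt (∑ i, ((a - b) i) ^ 2)
      ≤ Real.sqrt ((sa + sb) ^ 2) := Real.sqrt_le_sqrt h1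
    _ = sa + sb := Real.sqrt_sq (by positivity)

/-- If `S` has entries in `{0,1}` with at most `h` nonzero entries per column, and
`A, A'` agree in every row except possibly row `k`, with all rows of `A` and `A'` of
`ℓ₂` norm at most `B`, then `‖SA − SA'‖_F ≤ 2B√h`. -/
theorem stmt8 {r n m : ℕ} (S : Matrix (Fin r) (Fin n) ℝ)
    (hS01 : ∀ i j, S i j = 0 ∨ S i j = 1)
    (h : ℕ)
    (hScol : ∀ j : Fin n, (Finset.univ.filter fun i : Fin r => S i j ≠ 0).card ≤ h)
    (A A' : Matrix (Fin n) (Fin m) ℝ) (k : Fin n)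
    (hneighbour : ∀ i : Fin n, i ≠ k → A i = A' i)
    (B : ℝ) (hB : ∀ i, euclNorm (A i) ≤ B) (hB' : ∀ i, euclNorm (A' i) ≤ B) :
    frobNorm (S * A - S * A') ≤ 2 * B * Real.sqrt h := by
  have hBnn : 0 ≤ B := le_trans (Real.sqrt_nonneg _) (hB k)
  set d : Fin m → ℝ := fun j => A k j - A' k j with hd
  -- entries of the difference
  have hentry : ∀ i j, (S * A - S * A') i j = S i k * d j := by
    intro i j
    simp only [Matrix.sub_apply, Matrix.mul_apply, ← Finset.sum_sub_distrib]
    rw [Finset.sum_eq_single k]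
    · ring
    · intro l _ hl
      rw [hneighbour l hl]; ring
    · intro hk; exact absurd (Finset.mem_univ k) hk
  -- sum of squares of S's column k
  have hT : ∑ i, (S i k) ^ 2 ≤ (h : ℝ) := by
    have : ∑ i, (S i k) ^ 2 =
        ((Finset.univ.filter fun i : Fin r => S i k ≠ 0).card : ℝ) := by
      rw [Finset.card_filter]
      push_cast
      apply Finset.sum_congr rfl
      intro i _
      rcases hS01 i k with h0 | h1
      · simp [h0]
      · simp [h1]
    rw [this]
    exact_mod_cast hScol k
  -- norm of d
  have hD : ∑ j, d j ^ 2 ≤ (2 * B) ^ 2 := by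
    have htri : euclNorm d ≤ 2 * B := by
      have : euclNorm d ≤ euclNorm (A k) + euclNorm (A' k) := by
        have := eucl_triangle (A k) (A' k)
        exact this
      linarith [hB k, hB' k]
    have hnn : 0 ≤ ∑ j, d j ^ 2 := Finset.sum_nonneg fun j _ => sq_nonneg _
    calc ∑ j, d j ^ 2 = (euclNorm d) ^ 2 := (Real.sq_sqrt hnn).symm
      _ ≤ (2 * B) ^ 2 := by
          apply pow_le_pow_left₀ (Real.sqrt_nonneg _) htri
  unfold frobNorm
  have hsum : ∑ i, ∑ j, ((S * A - S * A') i j) ^ 2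
      = (∑ i, (S i k) ^ 2) * ∑ j, d j ^ 2 := by
    rw [Finset.sum_mul]
    apply Finset.sum_congr rfl
    intro i _
    rw [Finset.mul_sum]
    apply Finset.sum_congr rfl
    intro j _
    rw [hentry i j]; ring
  rw [hsum]
  calc Real.sqrt ((∑ i, (S i k) ^ 2) * ∑ j, d j ^ 2)
      ≤ Real.sqrt ((h : ℝ) * (2 * B) ^ 2) := by
        apply Real.sqrt_le_sqrt
        apply mul_le_mul hT hD (Finset.sum_nonneg fun j _ => sq_nonneg _) (Nat.cast_nonneg h)
    _ = 2 * B * Real.sqrt h := by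
        rw [Real.sqrt_mul (Nat.cast_nonneg h), Real.sqrt_sq (by positivity)]
        ring
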